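/- Define f̃ : ℝ^{n+1} → ℝ^{2n} by f̃(x₀, x₁, …, xₙ) = (x₁, x₀x₁, x₂, x₀x₂, …, xₙ, x₀xₙ). Then the restriction f of f̃ to the unit sphere S^n ⊂ ℝ^{n+1} is an immersion, i.e., for every p ∈ S^n the derivative of f̃ restricted to the tangent space T_p S^n is injective (has rank n). -/

import Mathlib

open scoped RealInnerProductSpace

/-- The map `f̃(x₀, x₁, …, xₙ) = (x₁, x₀x₁, …, xₙ, x₀xₙ)` from `ℝ^{n+1}` to `ℝ^{2n}`. -/
def ftilde (n : ℕ) (x : EuclideanSpace ℝ (Fin (n + 1))) : Fin n → ℝ × ℝ :=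
  fun j => (x j.succ, x 0 * x j.succ)

/-- The restriction of `f̃` to the unit sphere `Sⁿ` is an immersion: at each point `p`
of the sphere, the derivative of `f̃` is injective on the tangent space
`T_p Sⁿ = {v : ⟪v, p⟫ = 0}`. -/
theorem ftilde_immersion_on_sphere (n : ℕ) (p : EuclideanSpace ℝ (Fin (n + 1)))
    (hp : ‖p‖ = 1) (v : EuclideanSpace ℝ (Fin (n + 1))) (hv : ⟪v, p⟫ = 0)
    (hdv : fderiv ℝ (ftilde n) p v = 0) : v = 0 := by
  have hproj : ∀ i, HasFDerivAt (fun x : EuclideanSpace ℝ (Fin (n + 1)) => x i)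
      (EuclideanSpace.proj i : EuclideanSpace ℝ (Fin (n + 1)) →L[ℝ] ℝ) p := by
    intro i
    have := (EuclideanSpace.proj (𝕜 := ℝ) i).hasFDerivAt (x := p)
    simpa [EuclideanSpace.proj] using this
  set P : Fin (n + 1) → (EuclideanSpace ℝ (Fin (n + 1)) →L[ℝ] ℝ) :=
    fun i => EuclideanSpace.proj i with hP
  have hcomp : ∀ j : Fin n, HasFDerivAt
      (fun x : EuclideanSpace ℝ (Fin (n + 1)) => (x j.succ, x 0 * x j.succ))
      ((P j.succ).prod (p 0 • P j.succ + p j.succ • P 0)) p :=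
    fun j => (hproj j.succ).prodMk ((hproj 0).mul (hproj j.succ))
  have hft : HasFDerivAt (ftilde n)
      (ContinuousLinearMap.pi fun j : Fin n =>
        (P j.succ).prod (p 0 • P j.succ + p j.succ • P 0)) p :=
    hasFDerivAt_pi.2 hcomp
  rw [hft.fderiv] at hdv
  have h : ∀ j : Fin n, v j.succ = 0 ∧ p 0 * v j.succ + p j.succ * v 0 = 0 := by
    intro j
    have := congrFun hdv j
    simp [ContinuousLinearMap.pi_apply, Prod.ext_iff] at this
    exact this
  have hvs : ∀ j : Fin n, v j.succ = 0 := fun j => (h j).1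
  have hv0p : ∀ j : Fin n, p j.succ * v 0 = 0 := by
    intro j
    have := (h j).2
    rw [hvs j] at this
    simpa using this
  -- inner product: ⟪v, p⟫ = ∑ v i * p i = v 0 * p 0
  have hinner : v 0 * p 0 = 0 := by
    have : ∑ i, v i * p i = 0 := by
      rw [← hv]; simp [PiLp.inner_apply, RCLike.inner_apply, mul_comm]
    rw [Fin.sum_univ_succ] at this
    simpa [hvs] using this
  by_cases hv0 : v 0 = 0
  · ext i
    refine Fin.cases ?_ ?_ i
    · exact hv0
    · exact fun j => hvs j
  · exfalso
    have hp0 : p 0 = 0 := by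
      rcases mul_eq_zero.1 hinner with h' | h'
      · exact absurd h' hv0
      · exact h'
    have hps : ∀ j : Fin n, p j.succ = 0 := fun j => by
      rcases mul_eq_zero.1 (hv0p j) with h' | h'
      · exact h'
      · exact absurd h' hv0
    have : p = 0 := by
      ext i
      refine Fin.cases hp0 hps i
    rw [this] at hp
    simp at hp
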